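/- Let X be a locally compact, σ-compact Hausdorff topological space, and let E ⊆ C(X) be a linear subspace closed under the pointwise lattice operations ⊔ and ⊓ (a sublattice) such that every element of E has compact support and E is dense in C(X) with the compact-open topology. Then for every continuous f : X → ℝ with f ≥ 0 there exists a sequence (e_n) in E with 0 ≤ e_n ≤ f and e_n ≤ e_{n+1} for all n, which converges relatively uniformly to f: there is a continuous g : X → ℝ such that for every ε > 0 there is N with |f(x) − e_n(x)| ≤ ε·g(x) for all n ≥ N and all x ∈ X. -/

import Mathlib

open Set Function

/-- Let `X` be a locally compact σ-compact Hausdorff space and let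
`E ⊆ C(X)` be a dense sublattice all of whose elements have compact support. Then every
`0 ≤ f ∈ C(X)` is the relatively uniform limit of an increasing sequence in
`E ∩ [0, f]`. -/
theorem stmt_13 (X : Type*) [TopologicalSpace X] [T2Space X] [LocallyCompactSpace X]
    [SigmaCompactSpace X]
    (E : Set C(X, ℝ)) (hzero : (0 : C(X, ℝ)) ∈ E)
    (hadd : ∀ x ∈ E, ∀ y ∈ E, x + y ∈ E) (hsmul : ∀ (c : ℝ), ∀ x ∈ E, c • x ∈ E)
    (hsup : ∀ x ∈ E, ∀ y ∈ E, x ⊔ y ∈ E) (hinf : ∀ x ∈ E, ∀ y ∈ E, x ⊓ y ∈ E)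
    (hcs : ∀ e ∈ E, HasCompactSupport (e : X → ℝ))
    (hdense : Dense E)
    (f : C(X, ℝ)) (hf : 0 ≤ f) :
    ∃ e : ℕ → C(X, ℝ), (∀ n : ℕ, e n ∈ E) ∧ (∀ n : ℕ, 0 ≤ e n ∧ e n ≤ f) ∧
      (∀ n : ℕ, e n ≤ e (n + 1)) ∧
      ∃ g : C(X, ℝ), ∀ ε : ℝ, 0 < ε → ∃ N : ℕ, ∀ n ≥ N, ∀ x : X,
        |f x - e n x| ≤ ε * g x := by
  classical
  have hfx : ∀ x, 0 ≤ f x := fun x => hf x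
  -- Density in compact-open topology, in concrete form.
  have D : ∀ (f0 : C(X, ℝ)) (K : Set X), IsCompact K → ∀ ε : ℝ, 0 < ε →
      ∃ h ∈ E, ∀ x ∈ K, |h x - f0 x| < ε := by
    intro f0 K hK ε hε
    have hb := nhds_basis_uniformity' (x := f0)
      (ContinuousMap.hasBasis_compactConvergenceUniformity (α := X) (β := ℝ))
    have hf0 : f0 ∈ closure E := hdense f0
    rw [mem_closure_iff_nhds_basis hb] at hf0
    obtain ⟨h, hhE, hh⟩ := hf0 (K, {p : ℝ × ℝ | dist p.1 p.2 < ε})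
      ⟨hK, Metric.dist_mem_uniformity hε⟩
    refine ⟨h, hhE, fun x hx => ?_⟩
    have := hh x hx
    rwa [Set.mem_setOf_eq, Real.dist_eq, abs_sub_comm] at this
  -- From density: elements of `E` nonnegative and `≥ 1` on a given compact set.
  have U1 : ∀ (K : Set X), IsCompact K → ∃ u ∈ E, (∀ x, 0 ≤ u x) ∧ ∀ x ∈ K, 1 ≤ u x := by
    intro K hK
    obtain ⟨u0, hu0E, hu0⟩ := D 1 K hK (1/2) (by norm_num)
    refine ⟨((2:ℝ) • u0) ⊔ 0, hsup _ (hsmul 2 _ hu0E) _ hzero, fun x => ?_, fun x hx => ?_⟩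
    · simp only [ContinuousMap.sup_apply, ContinuousMap.zero_apply, le_sup_right]
    · have h := hu0 x hx
      simp only [ContinuousMap.one_apply] at h
      have h2 : (1:ℝ)/2 ≤ u0 x := by
        rcases abs_sub_lt_iff.1 h with ⟨h1, h2⟩
        linarith
      have : (1:ℝ) ≤ 2 * u0 x := by linarith
      simp only [ContinuousMap.sup_apply, ContinuousMap.smul_apply, ContinuousMap.zero_apply,
        smul_eq_mul]
      exact le_sup_of_le_left this
  -- Core approximation lemma.
  have L : ∀ (K : Set X), IsCompact K → ∀ ε : ℝ, 0 < ε →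
      ∃ e ∈ E, (∀ x, 0 ≤ e x) ∧ (∀ x, e x ≤ f x) ∧ ∀ x ∈ K, f x - e x ≤ ε := by
    intro K hK ε hε
    obtain ⟨u, huE, hu0, hu1⟩ := U1 K hK
    set T := tsupport (u : X → ℝ) with hTdef
    have hTc : IsCompact T := hcs u huE
    have hK2 : IsCompact (T ∪ K) := hTc.union hK
    obtain ⟨u', hu'E, hu'0, hu'1⟩ := U1 (T ∪ K) hK2
    obtain ⟨C, hC1, hC⟩ : ∃ C : ℝ, 1 ≤ C ∧ ∀ x, u' x ≤ C := by
      obtain ⟨B, hB⟩ := ((hcs u' hu'E).image u'.continuous).bddAbove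
      refine ⟨max B 1, le_max_right _ _, fun x => ?_⟩
      by_cases hx : x ∈ tsupport (u' : X → ℝ)
      · exact le_trans (hB ⟨x, hx, rfl⟩) (le_max_left _ _)
      · rw [image_eq_zero_of_notMem_tsupport hx]; positivity
    obtain ⟨R, hR⟩ : ∃ R : ℝ, ∀ x ∈ T ∪ K, f x + 1 ≤ R := by
      obtain ⟨B, hB⟩ := (hK2.bddAbove_image f.continuous.continuousOn)
      exact ⟨B + 1, fun x hx => by have := hB ⟨x, hx, rfl⟩; linarith⟩
    set δ : ℝ := min 1 (ε / (1 + C)) with hδdef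
    have hδpos : 0 < δ := lt_min one_pos (div_pos hε (by linarith))
    have hδ1 : δ ≤ 1 := min_le_left _ _
    have hδε : δ * (1 + C) ≤ ε := by
      have h1 : δ ≤ ε / (1 + C) := min_le_right _ _
      have h2 : (0:ℝ) < 1 + C := by linarith
      calc δ * (1 + C) ≤ ε / (1 + C) * (1 + C) := by nlinarith
        _ = ε := div_mul_cancel₀ _ (ne_of_gt h2)
    obtain ⟨h2, hh2E, hh2⟩ := D f (T ∪ K) hK2 δ hδpos
    set h : C(X, ℝ) := (h2 ⊔ 0) ⊓ (R • u) with hhdef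
    have hhE : h ∈ E := hinf _ (hsup _ hh2E _ hzero) _ (hsmul R _ huE)
    set e : C(X, ℝ) := (h + (-δ) • u') ⊔ 0 with hedef
    have heE : e ∈ E := hsup _ (hadd _ hhE _ (hsmul (-δ) _ hu'E)) _ hzero
    have heapp : ∀ x, e x = max (min (max (h2 x) 0) (R * u x) + (-δ) * u' x) 0 := by
      intro x
      simp [hedef, hhdef, ContinuousMap.sup_apply, ContinuousMap.inf_apply]
    refine ⟨e, heE, ?_, ?_, ?_⟩
    · intro x; rw [heapp x]; exact le_max_right _ _
    · intro x
      rw [heapp x]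
      refine max_le ?_ (hfx x)
      by_cases hxT : x ∈ T
      · have hx2 : |h2 x - f x| < δ := hh2 x (Or.inl hxT)
        have h1 : h2 x ≤ f x + δ := by
          rcases abs_sub_lt_iff.1 hx2 with ⟨ha, hb⟩; linarith
        have h2' : max (h2 x) 0 ≤ f x + δ := max_le h1 (by have := hfx x; linarith)
        have h3 : 1 ≤ u' x := hu'1 x (Or.inl hxT)
        have h4 : min (max (h2 x) 0) (R * u x) ≤ f x + δ := le_trans (min_le_left _ _) h2'
        nlinarith [hu'0 x]
      · have hux : u x = 0 := image_eq_zero_of_notMem_tsupport hxT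
        have h4 : min (max (h2 x) 0) (R * u x) ≤ 0 := by
          rw [hux, mul_zero]; exact min_le_right _ _
        have := hu'0 x; have := hfx x
        nlinarith
    · intro x hxK
      have hx2 : |h2 x - f x| < δ := hh2 x (Or.inr hxK)
      have h1 : f x - δ ≤ h2 x := by
        rcases abs_sub_lt_iff.1 hx2 with ⟨ha, hb⟩; linarith
      have h1' : f x - δ ≤ max (h2 x) 0 := le_trans h1 (le_max_left _ _)
      have h2' : f x - δ ≤ R * u x := by
        have hu : 1 ≤ u x := hu1 x hxK
        have hRx : f x + 1 ≤ R := hR x (Or.inr hxK)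
        have hR0 : (0:ℝ) ≤ R := by have := hfx x; linarith
        have : R * 1 ≤ R * u x := mul_le_mul_of_nonneg_left hu hR0
        have := hfx x
        nlinarith
      have h3 : f x - δ ≤ min (max (h2 x) 0) (R * u x) := le_min h1' h2'
      have h4 : u' x ≤ C := hC x
      have h5 : min (max (h2 x) 0) (R * u x) + (-δ) * u' x ≤ e x := by
        rw [heapp x]; exact le_max_left _ _
      nlinarith
  -- Compact exhaustion.
  set Kex : CompactExhaustion X := CompactExhaustion.choice X with hKex
  choose e' he'E he'0 he'f he'K using fun n : ℕ =>
    L (Kex n) (Kex.isCompact n) ((1/2) ^ n) (by positivity)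
  set e : ℕ → C(X, ℝ) := fun n => Nat.rec (e' 0) (fun n ih => ih ⊔ e' (n + 1)) n with hedef
  have he0 : e 0 = e' 0 := rfl
  have hesucc : ∀ n, e (n + 1) = e n ⊔ e' (n + 1) := fun n => rfl
  have heE : ∀ n, e n ∈ E := by
    intro n; induction n with
    | zero => exact he'E 0
    | succ n ih => rw [hesucc]; exact hsup _ ih _ (he'E (n + 1))
  have henn : ∀ n, ∀ x, 0 ≤ e n x := by
    intro n; induction n with
    | zero => exact he'0 0
    | succ n ih =>
      intro x
      rw [hesucc]
      exact le_trans (ih x) (by simp [ContinuousMap.sup_apply, le_max_left])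
  have helef : ∀ n, ∀ x, e n x ≤ f x := by
    intro n; induction n with
    | zero => exact he'f 0
    | succ n ih =>
      intro x
      rw [hesucc]
      simp only [ContinuousMap.sup_apply]
      exact max_le (ih x) (he'f (n + 1) x)
  have hemono : ∀ n, e n ≤ e (n + 1) := by
    intro n
    rw [hesucc]
    exact le_sup_left
  have hege : ∀ n, ∀ x, e' n x ≤ e n x := by
    intro n
    cases n with
    | zero => exact fun x => le_rfl
    | succ n =>
      intro x
      rw [hesucc]
      simp only [ContinuousMap.sup_apply]
      exact le_max_right _ _
  have heK : ∀ n, ∀ x ∈ Kex n, f x - e n x ≤ (1/2) ^ n := by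
    intro n x hx
    have := he'K n x hx
    have := hege n x
    linarith
  -- Urysohn functions for the regulator.
  have hUry : ∀ n : ℕ, ∃ θ : C(X, ℝ), EqOn θ 0 (Kex n) ∧ EqOn θ 1 (interior (Kex (n + 1)))ᶜ ∧
      ∀ x, θ x ∈ Set.Icc (0 : ℝ) 1 := by
    intro n
    exact exists_continuous_zero_one_of_isClosed (Kex.isCompact n).isClosed
      (isOpen_interior).isClosed_compl
      (disjoint_compl_right.mono_left (Kex.subset_interior_succ n))
  choose θ hθ0 hθ1 hθ01 using hUry
  set term : ℕ → X → ℝ := fun n x => (2:ℝ) ^ n * θ n x with htermdef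
  have htermnn : ∀ n x, 0 ≤ term n x := fun n x =>
    mul_nonneg (by positivity) (hθ01 n x).1
  have hsupp : ∀ n, Function.support (term n) ⊆ (Kex n : Set X)ᶜ := by
    intro n x hx hxK
    exact hx (by simp [htermdef, hθ0 n hxK])
  have hlf : LocallyFinite fun n => Function.support (term n) := by
    intro x
    obtain ⟨m, hm⟩ := Kex.exists_mem x
    refine ⟨interior (Kex (m + 1)), isOpen_interior.mem_nhds (Kex.subset_interior_succ m hm), ?_⟩
    refine Set.Finite.subset (Set.finite_Iio (m + 1)) ?_
    intro n hn
    by_contra hnm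
    simp only [Set.mem_Iio, not_lt] at hnm
    obtain ⟨y, hy1, hy2⟩ := hn
    exact hsupp n hy1 (Kex.subset hnm (interior_subset hy2))
  have hθcont : Continuous fun x => ∑ᶠ n, term n x :=
    continuous_finsum (fun n => (continuous_const.mul (θ n).continuous)) hlf
  have hθsumnn : ∀ x, 0 ≤ ∑ᶠ n, term n x := fun x =>
    finsum_nonneg (fun n => htermnn n x)
  have hptfin : ∀ x : X, (Function.support fun n => term n x).Finite := by
    intro x
    have := hlf.point_finite x
    convert this using 1; rfl
  have hθsumge : ∀ n : ℕ, ∀ x : X, x ∉ Kex (n + 1) → (2:ℝ) ^ n ≤ ∑ᶠ m, term m x := by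
    intro n x hx
    have hx' : x ∈ (interior (Kex (n + 1)))ᶜ := fun h => hx (interior_subset h)
    have h1 : term n x = (2:ℝ) ^ n := by
      simp [htermdef, hθ1 n hx']
    calc (2:ℝ) ^ n = term n x := h1.symm
      _ ≤ ∑ᶠ m, term m x := single_le_finsum n (hptfin x) (fun m => htermnn m x)
  set g : C(X, ℝ) := ⟨fun x => 1 + f x * ∑ᶠ n, term n x,
    continuous_const.add (f.continuous.mul hθcont)⟩ with hgdef
  have hg1 : ∀ x, 1 ≤ g x := by
    intro x
    have := mul_nonneg (hfx x) (hθsumnn x)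
    simp only [hgdef, ContinuousMap.coe_mk]
    linarith
  refine ⟨e, heE, fun n => ⟨fun x => henn n x, fun x => helef n x⟩, hemono, g, ?_⟩
  intro ε hε
  obtain ⟨M, hM⟩ := pow_unbounded_of_one_lt (1/ε) (by norm_num : (1:ℝ) < 2)
  refine ⟨M + 1, fun n hn x => ?_⟩
  have habs : |f x - e n x| = f x - e n x := abs_of_nonneg (by have := helef n x; linarith)
  rw [habs]
  by_cases hx : x ∈ Kex n
  · have h1 : f x - e n x ≤ (1/2) ^ n := heK n x hx
    have h2 : ((1:ℝ)/2) ^ n ≤ (1/2) ^ M := by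
      apply pow_le_pow_of_le_one (by norm_num) (by norm_num)
      omega
    have h3 : ((1:ℝ)/2) ^ M < ε := by
      rw [div_pow, one_pow]
      rw [div_lt_iff₀ (by positivity)]
      rw [div_lt_iff₀ hε] at hM
      nlinarith [hM]
    have h4 : ε ≤ ε * g x := le_mul_of_one_le_right (le_of_lt hε) (hg1 x)
    linarith
  · have hxM : x ∉ Kex (M + 1) := fun h => hx (Kex.subset hn h)
    have h1 : (2:ℝ) ^ M ≤ ∑ᶠ m, term m x := hθsumge M x hxM
    have h2 : f x - e n x ≤ f x := by have := henn n x; linarith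
    have h3 : 1 < ε * 2 ^ M := by
      rw [div_lt_iff₀ hε] at hM; nlinarith
    have h4 : f x ≤ ε * g x := by
      have h5 : f x * 1 ≤ f x * (ε * 2 ^ M) := mul_le_mul_of_nonneg_left (le_of_lt h3) (hfx x)
      have h6 : f x * (ε * 2 ^ M) ≤ f x * (ε * ∑ᶠ m, term m x) := by
        apply mul_le_mul_of_nonneg_left _ (hfx x)
        exact mul_le_mul_of_nonneg_left h1 (le_of_lt hε)
      simp only [hgdef, ContinuousMap.coe_mk]
      have := hfx x
      nlinarith [hθsumnn x]
    linarith
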